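/- The Hilbert-Schmidt entanglement of the Bell state Ψ₁ equals 1/3: min over separable states ρ on ℂ²⊗ℂ² of ‖ρ − Ψ₁‖²_HS = 1/3, and the minimum is attained at the Werner state W_{ψ₁,1/3} = (1/6)𝟙 + (1/3)Ψ₁. -/

import Mathlib

open Matrix ComplexOrder Kronecker

/-- Squared Hilbert-Schmidt norm: ‖A‖²_HS = tr(A*A). -/
noncomputable def hsNormSq {n : Type*} [Fintype n] (A : Matrix n n ℂ) : ℝ :=
  (Aᴴ * A).trace.re

/-- A density matrix: positive semidefinite with trace 1. -/
def IsDensity {n : Type*} [Fintype n] [DecidableEq n] (ρ : Matrix n n ℂ) : Prop :=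
  ρ.PosSemidef ∧ ρ.trace = 1

/-- A separable (disentangled) state: a finite convex combination of
tensor products of density matrices. -/
def IsSepState {m n : Type*} [Fintype m] [Fintype n] [DecidableEq m] [DecidableEq n]
    (ρ : Matrix (m × n) (m × n) ℂ) : Prop :=
  ∃ (k : ℕ) (p : Fin k → ℝ) (ρ₁ : Fin k → Matrix m m ℂ) (ρ₂ : Fin k → Matrix n n ℂ),
    (∀ i, 0 ≤ p i) ∧ (∑ i, p i = 1) ∧ (∀ i, IsDensity (ρ₁ i)) ∧ (∀ i, IsDensity (ρ₂ i)) ∧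
    ρ = ∑ i, (p i : ℂ) • ((ρ₁ i) ⊗ₖ (ρ₂ i))

/-- The rank-one projector |v⟩⟨v| onto a vector v. -/
noncomputable def proj {n : Type*} [Fintype n] (v : n → ℂ) : Matrix n n ℂ :=
  Matrix.vecMulVec v (star v)

/-- The four Bell vectors ψ₁,ψ₂,ψ₃,ψ₄ on ℂ²⊗ℂ². -/
noncomputable def bell (i : Fin 4) (p : Fin 2 × Fin 2) : ℂ :=
  (((Real.sqrt 2 : ℝ) : ℂ))⁻¹ *
    (if i = 0 then (if p = (0, 0) then 1 else if p = (1, 1) then 1 else 0)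
     else if i = 1 then (if p = (0, 0) then 1 else if p = (1, 1) then -1 else 0)
     else if i = 2 then (if p = (0, 1) then 1 else if p = (1, 0) then 1 else 0)
     else (if p = (0, 1) then 1 else if p = (1, 0) then -1 else 0))

lemma bell0_apply (p : Fin 2 × Fin 2) :
    bell 0 p = (((Real.sqrt 2 : ℝ) : ℂ))⁻¹ * (if p = (0,0) ∨ p = (1,1) then 1 else 0) := by
  rw [bell, if_pos rfl]
  congr 1
  by_cases h1 : p = (0,0)
  · rw [if_pos h1, if_pos (Or.inl h1)]
  · by_cases h2 : p = (1,1)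
    · rw [if_neg h1, if_pos h2, if_pos (Or.inr h2)]
    · rw [if_neg h1, if_neg h2, if_neg (by tauto)]

lemma psi_apply (p q : Fin 2 × Fin 2) :
    proj (bell 0) p q =
      (1/2 : ℂ) * (if p = (0,0) ∨ p = (1,1) then 1 else 0)
        * (if q = (0,0) ∨ q = (1,1) then 1 else 0) := by
  have h2 : (((Real.sqrt 2 : ℝ) : ℂ))⁻¹ * (((Real.sqrt 2 : ℝ) : ℂ))⁻¹ = 1/2 := by
    rw [← mul_inv]
    norm_cast
    rw [Real.mul_self_sqrt (by norm_num)]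
    norm_num
  rw [proj, vecMulVec_apply, Pi.star_apply, bell0_apply, bell0_apply, star_mul',
    apply_ite (star : ℂ → ℂ), star_one, star_zero, star_inv₀, RCLike.star_def, Complex.conj_ofReal]
  rw [show ∀ a b c d : ℂ, (a * b) * (c * d) = (a * c) * b * d by intros; ring, h2]

noncomputable def ip {n : Type*} [Fintype n] (X Y : Matrix n n ℂ) : ℝ :=
  ((Xᴴ * Y).trace).re

lemma hsNormSq_eq_ip {n : Type*} [Fintype n] (A : Matrix n n ℂ) : hsNormSq A = ip A A := rfl

lemma ip_comm {n : Type*} [Fintype n] (X Y : Matrix n n ℂ) : ip X Y = ip Y X := by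
  unfold ip
  rw [show Yᴴ * X = (Xᴴ * Y)ᴴ by simp [conjTranspose_mul], trace_conjTranspose]
  simp

lemma ip_sub_left {n : Type*} [Fintype n] (X Y Z : Matrix n n ℂ) :
    ip (X - Y) Z = ip X Z - ip Y Z := by
  simp [ip, conjTranspose_sub, Matrix.sub_mul, trace_sub, Complex.sub_re]

lemma ip_sub_right {n : Type*} [Fintype n] (X Y Z : Matrix n n ℂ) :
    ip X (Y - Z) = ip X Y - ip X Z := by
  simp [ip, Matrix.mul_sub, trace_sub, Complex.sub_re]

lemma hsNormSq_nonneg {n : Type*} [Fintype n] (A : Matrix n n ℂ) : 0 ≤ hsNormSq A := by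
  unfold hsNormSq
  rw [Matrix.trace]
  simp only [Matrix.diag_apply, Matrix.mul_apply, Matrix.conjTranspose_apply, Complex.re_sum]
  apply Finset.sum_nonneg; intro j _
  apply Finset.sum_nonneg; intro i _
  rw [show (star (A i j) * A i j) = ((Complex.normSq (A i j) : ℝ) : ℂ) by
    rw [Complex.star_def, ← Complex.normSq_eq_conj_mul_self]]
  simp [Complex.normSq_nonneg]

lemma hs_expand {n : Type*} [Fintype n] (M A B : Matrix n n ℂ) :
    hsNormSq (M - A) =
      hsNormSq (M - B) + 2 * ip (B - A) (M - B) + hsNormSq (B - A) := by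
  simp only [hsNormSq_eq_ip, ip_sub_left, ip_sub_right]
  rw [ip_comm A M, ip_comm B M, ip_comm A B]
  ring

lemma trace_psi : (proj (bell 0)).trace = 1 := by
  simp [Matrix.trace, Matrix.diag_apply, Fintype.sum_prod_type, Fin.sum_univ_two, psi_apply,
    Prod.ext_iff]
  norm_num

lemma trace_psi_mul_psi : (proj (bell 0) * proj (bell 0)).trace = 1 := by
  simp [Matrix.trace, Matrix.diag_apply, Matrix.mul_apply, Fintype.sum_prod_type,
    Fin.sum_univ_two, psi_apply, Prod.ext_iff]
  norm_num

lemma psi_herm : (proj (bell 0))ᴴ = proj (bell 0) := by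
  ext p q
  rw [conjTranspose_apply, psi_apply, psi_apply]
  simp only [mul_ite, mul_one, mul_zero, ite_mul, zero_mul]
  split_ifs <;> simp

lemma proj_posSemidef {n : Type*} [Fintype n] (v : n → ℂ) : (proj v).PosSemidef := by
  refine Matrix.posSemidef_iff_dotProduct_mulVec.mpr ⟨?_, fun x => ?_⟩
  · ext i j
    simp [proj, vecMulVec_apply, conjTranspose_apply, mul_comm]
  · have h : (proj v) *ᵥ x = (star v ⬝ᵥ x) • v := by
      ext i
      simp only [proj, mulVec, dotProduct, vecMulVec_apply, Pi.star_apply, Pi.smul_apply,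
        smul_eq_mul, Finset.sum_mul]
      congr 1; ext j; ring
    rw [h, dotProduct_smul, smul_eq_mul]
    have h2 : star v ⬝ᵥ x = star (star x ⬝ᵥ v) := by
      simp [dotProduct, Finset.sum_mul, star_sum, mul_comm]
    rw [h2]
    exact star_mul_self_nonneg _

lemma density_facts {A : Matrix (Fin 2) (Fin 2) ℂ} (hA : IsDensity A) :
    0 ≤ (A 0 0).re ∧ 0 ≤ (A 1 1).re ∧ (A 0 0).re + (A 1 1).re = 1 ∧
    A 0 0 = ((A 0 0).re : ℂ) ∧ A 1 1 = ((A 1 1).re : ℂ) ∧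
    A 1 0 = starRingEnd ℂ (A 0 1) ∧
    Complex.normSq (A 0 1) ≤ (A 0 0).re * (A 1 1).re := by
  obtain ⟨⟨herm, quad⟩, htr⟩ := And.imp_left Matrix.posSemidef_iff_dotProduct_mulVec.mp hA
  have h10 : A 1 0 = starRingEnd ℂ (A 0 1) := (herm.apply 1 0).symm
  have h00 : A 0 0 = ((A 0 0).re : ℂ) := by
    have := herm.apply 0 0
    rw [RCLike.star_def] at this
    exact ((Complex.conj_eq_iff_re).mp this).symm
  have h11 : A 1 1 = ((A 1 1).re : ℂ) := by
    have := herm.apply 1 1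
    rw [RCLike.star_def] at this
    exact ((Complex.conj_eq_iff_re).mp this).symm
  have ha : 0 ≤ (A 0 0).re := by
    have := quad ![1, 0]
    simp [dotProduct, mulVec, Fin.sum_univ_two] at this
    exact (Complex.le_def.mp this).1
  have hd : 0 ≤ (A 1 1).re := by
    have := quad ![0, 1]
    simp [dotProduct, mulVec, Fin.sum_univ_two] at this
    exact (Complex.le_def.mp this).1
  have hsum : (A 0 0).re + (A 1 1).re = 1 := by
    have := congrArg Complex.re (Matrix.trace_fin_two A ▸ htr)
    simpa using this
  refine ⟨ha, hd, hsum, h00, h11, h10, ?_⟩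
  set a := (A 0 0).re
  set d := (A 1 1).re
  set c := A 0 1
  set u := Complex.normSq c with hu_def
  have hu0 : 0 ≤ u := Complex.normSq_nonneg c
  have hqr : ∀ r : ℝ, 0 ≤ a * u * r ^ 2 + 2 * u * r + d := by
    intro r
    have hq := quad ![(r : ℂ) * c, 1]
    have hcalc : star ![(r : ℂ) * c, 1] ⬝ᵥ A *ᵥ ![(r : ℂ) * c, 1]
        = ((a * u * r ^ 2 + 2 * u * r + d : ℝ) : ℂ) := by
      simp only [dotProduct, mulVec, Fin.sum_univ_two, Matrix.cons_val_zero, Matrix.cons_val_one,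
        Matrix.head_cons, Pi.star_apply, star_mul', star_one]
      rw [h00, h11, h10, show A 0 1 = c from rfl]
      push_cast
      simp only [Complex.star_def, Complex.conj_ofReal]
      have hcc : (starRingEnd ℂ) c * c = (u : ℂ) := by
        rw [hu_def]; rw [Complex.normSq_eq_conj_mul_self]
      linear_combination ((a : ℂ) * r ^ 2 + 2 * r) * hcc
    rw [hcalc] at hq
    exact_mod_cast (Complex.zero_le_real).mp hq
  by_cases hu : u = 0
  · rw [hu_def] at hu
    rw [hu_def, hu]
    exact mul_nonneg ha hd
  · have hupos : 0 < u := lt_of_le_of_ne hu0 (Ne.symm hu)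
    have hapos : 0 < a := by
      rcases lt_or_eq_of_le ha with h | h
      · exact h
      · exfalso
        have := hqr (-(d + 1) / (2 * u))
        rw [← h] at this
        have h2 : (0:ℝ) * u * (-(d + 1) / (2 * u)) ^ 2 + 2 * u * (-(d + 1) / (2 * u)) + d
            = -1 := by field_simp; ring
        rw [h2] at this
        linarith
    have := hqr (-1 / a)
    have h2 : a * u * (-1 / a) ^ 2 + 2 * u * (-1 / a) + d = d - u / a := by
      field_simp; ring
    rw [h2] at this
    have := (div_le_iff₀ hapos).mp (by linarith : u / a ≤ d)
    linarith [this]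

lemma trace_psi_kron (A B : Matrix (Fin 2) (Fin 2) ℂ) :
    (proj (bell 0) * (A ⊗ₖ B)).trace =
      (1/2 : ℂ) * (A 0 0 * B 0 0 + A 0 1 * B 0 1 + A 1 0 * B 1 0 + A 1 1 * B 1 1) := by
  simp [Matrix.trace, Matrix.diag_apply, Matrix.mul_apply, Fintype.sum_prod_type,
    Fin.sum_univ_two, psi_apply, kroneckerMap_apply, Prod.ext_iff]
  ring

lemma overlap_le_half {A B : Matrix (Fin 2) (Fin 2) ℂ}
    (hA : IsDensity A) (hB : IsDensity B) :
    ((proj (bell 0) * (A ⊗ₖ B)).trace).re ≤ 1/2 := by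
  obtain ⟨ha1, hd1, hs1, h001, h111, h101, hn1⟩ := density_facts hA
  obtain ⟨ha2, hd2, hs2, h002, h112, h102, hn2⟩ := density_facts hB
  rw [trace_psi_kron]
  set a1 := (A 0 0).re; set d1 := (A 1 1).re; set c1 := A 0 1
  set a2 := (B 0 0).re; set d2 := (B 1 1).re; set c2 := B 0 1
  have hadd := Complex.add_conj (c1 * c2)
  push_cast at hadd
  have keyc : (1/2 : ℂ) * (A 0 0 * B 0 0 + A 0 1 * B 0 1 + A 1 0 * B 1 0 + A 1 1 * B 1 1)
      = ((1/2 * (a1 * a2 + d1 * d2 + 2 * (c1 * c2).re) : ℝ) : ℂ) := by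
    rw [h001, h111, h101, h002, h112, h102, show A 0 1 = c1 from rfl, show B 0 1 = c2 from rfl]
    push_cast
    linear_combination (1/2 : ℂ) * hadd - (1/2 : ℂ) * (RingHom.map_mul (starRingEnd ℂ) c1 c2)
  rw [keyc, Complex.ofReal_re]
  set r := (c1 * c2).re with hr_def
  have hr2 : r ^ 2 ≤ (a1 * d1) * (a2 * d2) := by
    have h1 : r ^ 2 ≤ Complex.normSq (c1 * c2) := by
      rw [Complex.normSq_apply]; nlinarith [sq_nonneg (c1 * c2).im]
    rw [Complex.normSq_mul] at h1
    calc r ^ 2 ≤ Complex.normSq c1 * Complex.normSq c2 := h1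
      _ ≤ (a1 * d1) * (a2 * d2) := by
          apply mul_le_mul hn1 hn2 (Complex.normSq_nonneg _) (mul_nonneg ha1 hd1)
  have hs0 : 0 ≤ a1 * d2 + d1 * a2 :=
    add_nonneg (mul_nonneg ha1 hd2) (mul_nonneg hd1 ha2)
  have h4 : 4 * r ^ 2 ≤ (a1 * d2 + d1 * a2) ^ 2 := by
    nlinarith [hr2, sq_nonneg (a1 * d2 - d1 * a2)]
  have h2rs : 2 * r ≤ a1 * d2 + d1 * a2 := by nlinarith [h4, hs0]
  nlinarith [h2rs, hs1, hs2]

noncomputable def Emat : Matrix (Fin 2 × Fin 2) (Fin 2 × Fin 2) ℂ :=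
  (6 : ℂ)⁻¹ • 1 - (2/3 : ℂ) • proj (bell 0)

lemma W_sub_psi :
    (6 : ℂ)⁻¹ • (1 : Matrix (Fin 2 × Fin 2) (Fin 2 × Fin 2) ℂ) + (3 : ℂ)⁻¹ • proj (bell 0)
      - proj (bell 0) = Emat := by
  rw [Emat]; module

lemma E_herm : Ematᴴ = Emat := by
  rw [Emat, conjTranspose_sub, conjTranspose_smul, conjTranspose_smul, conjTranspose_one,
    psi_herm]
  norm_num

lemma trace_one4 : (1 : Matrix (Fin 2 × Fin 2) (Fin 2 × Fin 2) ℂ).trace = 4 := by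
  rw [trace_one]
  simp

lemma ip_E (ρ : Matrix (Fin 2 × Fin 2) (Fin 2 × Fin 2) ℂ) :
    ip Emat ρ = 1/6 * ρ.trace.re - 2/3 * ((proj (bell 0) * ρ).trace).re := by
  rw [ip, E_herm, Emat, Matrix.sub_mul, Matrix.smul_mul, Matrix.smul_mul, Matrix.one_mul,
    trace_sub, trace_smul, trace_smul]
  rw [show (6:ℂ)⁻¹ = ((6⁻¹ : ℝ) : ℂ) by norm_num, show (2/3:ℂ) = ((2/3 : ℝ) : ℂ) by norm_num]
  simp only [smul_eq_mul, Complex.sub_re, Complex.mul_re, Complex.ofReal_re, Complex.ofReal_im,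
    zero_mul, sub_zero]
  norm_num

lemma trace_E : Emat.trace = 0 := by
  rw [Emat, trace_sub, trace_smul, trace_smul, trace_one4, trace_psi]
  norm_num

lemma trace_psi_E : (proj (bell 0) * Emat).trace = -(1/2) := by
  rw [Emat, Matrix.mul_sub, Matrix.mul_smul, Matrix.mul_smul, Matrix.mul_one, trace_sub,
    trace_smul, trace_smul, trace_psi, trace_psi_mul_psi]
  norm_num

lemma hsE : hsNormSq Emat = 1/3 := by
  rw [hsNormSq_eq_ip, ip_E, trace_E, trace_psi_E]
  norm_num

lemma sep_facts {ρ : Matrix (Fin 2 × Fin 2) (Fin 2 × Fin 2) ℂ} (h : IsSepState ρ) :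
    ρ.trace = 1 ∧ ((proj (bell 0) * ρ).trace).re ≤ 1/2 := by
  obtain ⟨k, p, ρ1, ρ2, hp0, hp1, hd1, hd2, hρ⟩ := h
  constructor
  · rw [hρ, trace_sum]
    have : ∀ i, ((p i : ℂ) • ((ρ1 i) ⊗ₖ (ρ2 i))).trace = (p i : ℂ) := by
      intro i
      rw [trace_smul, trace_kronecker, (hd1 i).2, (hd2 i).2]
      simp
    rw [Finset.sum_congr rfl (fun i _ => this i), ← Complex.ofReal_sum, hp1]
    simp
  · rw [hρ, Matrix.mul_sum]
    have : ∀ i, ((proj (bell 0) * ((p i : ℂ) • ((ρ1 i) ⊗ₖ (ρ2 i)))).trace).re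
        = p i * ((proj (bell 0) * ((ρ1 i) ⊗ₖ (ρ2 i))).trace).re := by
      intro i
      rw [Matrix.mul_smul, trace_smul]
      simp [Complex.mul_re]
    rw [trace_sum, Complex.re_sum, Finset.sum_congr rfl (fun i _ => this i)]
    calc ∑ i, p i * ((proj (bell 0) * ((ρ1 i) ⊗ₖ (ρ2 i))).trace).re
        ≤ ∑ i, p i * (1/2) := by
          apply Finset.sum_le_sum
          intro i _
          exact mul_le_mul_of_nonneg_left (overlap_le_half (hd1 i) (hd2 i)) (hp0 i)
      _ = 1/2 := by rw [← Finset.sum_mul, hp1]; norm_num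

lemma lower_bound {ρ : Matrix (Fin 2 × Fin 2) (Fin 2 × Fin 2) ℂ} (h : IsSepState ρ) :
    1/3 ≤ hsNormSq (ρ - proj (bell 0)) := by
  obtain ⟨htr, hov⟩ := sep_facts h
  have hexp := hs_expand ρ (proj (bell 0))
    ((6 : ℂ)⁻¹ • (1 : Matrix (Fin 2 × Fin 2) (Fin 2 × Fin 2) ℂ) + (3 : ℂ)⁻¹ • proj (bell 0))
  rw [W_sub_psi] at hexp
  have hcross : ip Emat (ρ - ((6 : ℂ)⁻¹ • 1 + (3 : ℂ)⁻¹ • proj (bell 0))) = 1/3 - 2/3 * ((proj (bell 0) * ρ).trace).re := by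
    rw [ip_sub_right, ip_E ρ, ip_E, htr]
    have htrW : ((6 : ℂ)⁻¹ • (1 : Matrix (Fin 2 × Fin 2) (Fin 2 × Fin 2) ℂ)
        + (3 : ℂ)⁻¹ • proj (bell 0)).trace = 1 := by
      rw [trace_add, trace_smul, trace_smul, trace_one4, trace_psi]
      norm_num
    have hpsiW : (proj (bell 0) * ((6 : ℂ)⁻¹ • (1 : Matrix (Fin 2 × Fin 2) (Fin 2 × Fin 2) ℂ)
        + (3 : ℂ)⁻¹ • proj (bell 0))).trace = 1/2 := by
      rw [Matrix.mul_add, Matrix.mul_smul, Matrix.mul_smul, Matrix.mul_one, trace_add,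
        trace_smul, trace_smul, trace_psi, trace_psi_mul_psi]
      norm_num
    rw [htrW, hpsiW]
    norm_num
    ring
  rw [hexp, hcross, hsE]
  have h1 := hsNormSq_nonneg (ρ - ((6 : ℂ)⁻¹ • 1 + (3 : ℂ)⁻¹ • proj (bell 0)))
  linarith

noncomputable def rr : ℂ := (((Real.sqrt 2 : ℝ) : ℂ))⁻¹

lemma rr_mul : rr * rr = 1/2 := by
  rw [rr, ← mul_inv]
  norm_cast
  rw [Real.mul_self_sqrt (by norm_num)]
  norm_num

lemma rr_star : star rr = rr := by
  rw [rr, star_inv₀, Complex.star_def, Complex.conj_ofReal]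

lemma proj_x_plus : proj ![rr, rr] = !![1/2, 1/2; 1/2, 1/2] := by
  ext i j
  fin_cases i <;> fin_cases j <;>
    simp [proj, vecMulVec_apply, rr_star, rr_mul]

lemma proj_x_minus : proj ![rr, -rr] = !![1/2, -(1/2); -(1/2), 1/2] := by
  ext i j
  fin_cases i <;> fin_cases j <;>
    simp [proj, vecMulVec_apply, rr_star, rr_mul, neg_mul, mul_neg]

lemma proj_y_plus : proj ![rr, Complex.I * rr] = !![1/2, -(Complex.I/2); Complex.I/2, 1/2] := by
  ext i j
  fin_cases i <;> fin_cases j <;>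
    simp only [proj, vecMulVec_apply, Pi.star_apply, Matrix.cons_val_zero, Matrix.cons_val_one,
      Matrix.head_cons, Matrix.cons_val', Matrix.empty_val', Matrix.cons_val_fin_one,
      Matrix.of_apply, star_mul', Complex.star_def, Complex.conj_I, rr_star, Fin.mk_zero,
      Fin.mk_one, map_inv₀, Complex.conj_ofReal, Matrix.vecHead, Matrix.vecTail]
  · linear_combination rr_mul
  · linear_combination (-Complex.I) * rr_mul
  · linear_combination Complex.I * rr_mul
  · linear_combination rr_mul - rr * rr * Complex.I_sq

lemma proj_y_minus : proj ![rr, -(Complex.I * rr)] = !![1/2, Complex.I/2; -(Complex.I/2), 1/2] := by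
  ext i j
  fin_cases i <;> fin_cases j <;>
    simp only [proj, vecMulVec_apply, Pi.star_apply, Matrix.cons_val_zero, Matrix.cons_val_one,
      Matrix.head_cons, Matrix.cons_val', Matrix.empty_val', Matrix.cons_val_fin_one,
      Matrix.of_apply, star_neg, star_mul', Complex.star_def, Complex.conj_I, rr_star,
      Fin.mk_zero, Fin.mk_one, map_inv₀, Complex.conj_ofReal, Matrix.vecHead,
      Matrix.vecTail]
  · linear_combination rr_mul
  · linear_combination Complex.I * rr_mul
  · linear_combination (-Complex.I) * rr_mul
  · linear_combination rr_mul - rr * rr * Complex.I_sq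

lemma proj_z_plus : proj ![1, 0] = !![1, 0; 0, 0] := by
  ext i j
  fin_cases i <;> fin_cases j <;> simp [proj, vecMulVec_apply]

lemma proj_z_minus : proj ![0, 1] = !![0, 0; 0, 1] := by
  ext i j
  fin_cases i <;> fin_cases j <;> simp [proj, vecMulVec_apply]

noncomputable def uvec : Fin 6 → Fin 2 → ℂ :=
  ![![rr, rr], ![rr, -rr], ![rr, Complex.I * rr], ![rr, -(Complex.I * rr)], ![1, 0], ![0, 1]]

noncomputable def vvec : Fin 6 → Fin 2 → ℂ :=
  ![![rr, rr], ![rr, -rr], ![rr, -(Complex.I * rr)], ![rr, Complex.I * rr], ![1, 0], ![0, 1]]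

lemma trace_proj_two (w : Fin 2 → ℂ) :
    (proj w).trace = w 0 * star (w 0) + w 1 * star (w 1) := by
  simp [Matrix.trace_fin_two, proj, vecMulVec_apply]

lemma uvec_density (i : Fin 6) : IsDensity (proj (uvec i)) := by
  refine ⟨proj_posSemidef _, ?_⟩
  fin_cases i
  · show (proj ![rr, rr]).trace = 1
    rw [trace_proj_two]; simp [rr_star]; linear_combination 2 * rr_mul
  · show (proj ![rr, -rr]).trace = 1
    rw [trace_proj_two]; simp [rr_star]; linear_combination 2 * rr_mul
  · show (proj ![rr, Complex.I * rr]).trace = 1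
    rw [trace_proj_two]
    simp [rr_star, star_mul', Complex.star_def, Complex.conj_I]
    linear_combination 2 * rr_mul - rr * rr * Complex.I_sq
  · show (proj ![rr, -(Complex.I * rr)]).trace = 1
    rw [trace_proj_two]
    simp [rr_star, star_mul', Complex.star_def, Complex.conj_I]
    linear_combination 2 * rr_mul - rr * rr * Complex.I_sq
  · show (proj ![(1:ℂ), 0]).trace = 1
    rw [trace_proj_two]; simp
  · show (proj ![(0:ℂ), 1]).trace = 1
    rw [trace_proj_two]; simp

lemma vvec_density (i : Fin 6) : IsDensity (proj (vvec i)) := by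
  refine ⟨proj_posSemidef _, ?_⟩
  fin_cases i
  · show (proj ![rr, rr]).trace = 1
    rw [trace_proj_two]; simp [rr_star]; linear_combination 2 * rr_mul
  · show (proj ![rr, -rr]).trace = 1
    rw [trace_proj_two]; simp [rr_star]; linear_combination 2 * rr_mul
  · show (proj ![rr, -(Complex.I * rr)]).trace = 1
    rw [trace_proj_two]
    simp [rr_star, star_mul', Complex.star_def, Complex.conj_I]
    linear_combination 2 * rr_mul - rr * rr * Complex.I_sq
  · show (proj ![rr, Complex.I * rr]).trace = 1
    rw [trace_proj_two]
    simp [rr_star, star_mul', Complex.star_def, Complex.conj_I]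
    linear_combination 2 * rr_mul - rr * rr * Complex.I_sq
  · show (proj ![(1:ℂ), 0]).trace = 1
    rw [trace_proj_two]; simp
  · show (proj ![(0:ℂ), 1]).trace = 1
    rw [trace_proj_two]; simp

lemma werner_decomp :
    (6 : ℂ)⁻¹ • (1 : Matrix (Fin 2 × Fin 2) (Fin 2 × Fin 2) ℂ) + (3 : ℂ)⁻¹ • proj (bell 0)
      = ∑ i : Fin 6, (((1/6 : ℝ) : ℂ)) • (proj (uvec i) ⊗ₖ proj (vvec i)) := by
  rw [Fin.sum_univ_six]
  have e0u : uvec 0 = ![rr, rr] := rfl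
  have e1u : uvec 1 = ![rr, -rr] := rfl
  have e2u : uvec 2 = ![rr, Complex.I * rr] := rfl
  have e3u : uvec 3 = ![rr, -(Complex.I * rr)] := rfl
  have e4u : uvec 4 = ![(1:ℂ), 0] := rfl
  have e5u : uvec 5 = ![(0:ℂ), 1] := rfl
  have e0v : vvec 0 = ![rr, rr] := rfl
  have e1v : vvec 1 = ![rr, -rr] := rfl
  have e2v : vvec 2 = ![rr, -(Complex.I * rr)] := rfl
  have e3v : vvec 3 = ![rr, Complex.I * rr] := rfl
  have e4v : vvec 4 = ![(1:ℂ), 0] := rfl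
  have e5v : vvec 5 = ![(0:ℂ), 1] := rfl
  rw [e0u, e1u, e2u, e3u, e4u, e5u, e0v, e1v, e2v, e3v, e4v, e5v,
    proj_x_plus, proj_x_minus, proj_y_plus, proj_y_minus, proj_z_plus, proj_z_minus]
  ext p q
  obtain ⟨p1, p2⟩ := p
  obtain ⟨q1, q2⟩ := q
  fin_cases p1 <;> fin_cases p2 <;> fin_cases q1 <;> fin_cases q2 <;>
    simp [psi_apply, Matrix.one_apply, kroneckerMap_apply, Prod.ext_iff] <;>
    ring_nf <;>
    simp [Complex.I_sq] <;>
    norm_num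

/-- The HS-entanglement of the Bell state Ψ₁ equals 1/3, attained at the
Werner state W_{ψ₁,1/3} = (1/6)𝟙 + (1/3)Ψ₁. -/
theorem EHS_bell_eq_third :
    IsLeast {x | ∃ ρ, IsSepState ρ ∧ x = hsNormSq (ρ - proj (bell 0))} (1 / 3)
    ∧ IsSepState ((6 : ℂ)⁻¹ • (1 : Matrix (Fin 2 × Fin 2) (Fin 2 × Fin 2) ℂ)
        + (3 : ℂ)⁻¹ • proj (bell 0))
    ∧ hsNormSq (((6 : ℂ)⁻¹ • (1 : Matrix (Fin 2 × Fin 2) (Fin 2 × Fin 2) ℂ)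
        + (3 : ℂ)⁻¹ • proj (bell 0)) - proj (bell 0)) = 1 / 3 := by
  have hsep : IsSepState ((6 : ℂ)⁻¹ • (1 : Matrix (Fin 2 × Fin 2) (Fin 2 × Fin 2) ℂ)
      + (3 : ℂ)⁻¹ • proj (bell 0)) := by
    refine ⟨6, fun _ => 1/6, fun i => proj (uvec i), fun i => proj (vvec i),
      fun i => by norm_num, by simp, uvec_density, vvec_density, ?_⟩
    exact werner_decomp
  have hval : hsNormSq (((6 : ℂ)⁻¹ • (1 : Matrix (Fin 2 × Fin 2) (Fin 2 × Fin 2) ℂ)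
      + (3 : ℂ)⁻¹ • proj (bell 0)) - proj (bell 0)) = 1 / 3 := by
    rw [W_sub_psi, hsE]
  refine ⟨⟨⟨_, hsep, hval.symm⟩, ?_⟩, hsep, hval⟩
  rintro x ⟨ρ, hρ, rfl⟩
  exact lower_bound hρ
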